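/- Let k : I×I → ℝ be a twice continuously differentiable symmetric positive semi-definite kernel on an interval I. Then for any times t_1,…,t_n ∈ I, the 2n×2n matrix with blocks cov(z_{t_i}, z_{t_j}) = k(t_i,t_j), cov(z_{t_i}, z'_{t_j}) = ∂k/∂y(t_i,t_j), cov(z'_{t_i}, z'_{t_j}) = ∂²k/(∂x∂y)(t_i,t_j) is positive semi-definite. -/

import Mathlib

open Matrix

noncomputable section

/-- Partial derivative of a bivariate kernel with respect to its first argument, within `I`. -/
def pdx (I : Set ℝ) (k : ℝ → ℝ → ℝ) (u v : ℝ) : ℝ :=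
  derivWithin (fun x => k x v) I u

/-- Partial derivative of a bivariate kernel with respect to its second argument, within `I`. -/
def pdy (I : Set ℝ) (k : ℝ → ℝ → ℝ) (u v : ℝ) : ℝ :=
  derivWithin (fun y => k u y) I v

/-- Second mixed partial derivative `∂²k/(∂x∂y)` of a bivariate kernel, within `I`. -/
def pdxy (I : Set ℝ) (k : ℝ → ℝ → ℝ) (u v : ℝ) : ℝ :=
  derivWithin (fun x => pdy I k x v) I u


open Set Filter Topology

set_option maxHeartbeats 1000000


lemma mvt_step (f f' : ℝ → ℝ) (v e : ℝ) (he : e ≠ 0)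
    (hc : ContinuousOn f (Set.uIcc v (v+e)))
    (hd : ∀ x ∈ Set.Ioo (min v (v+e)) (max v (v+e)), HasDerivAt f (f' x) x) :
    ∃ c ∈ Set.Ioo (min v (v+e)) (max v (v+e)), f' c = (f (v+e) - f v)/e := by
  rcases lt_or_gt_of_ne he with hneg | hpos
  · have hab : v + e < v := by linarith
    have hc' : ContinuousOn f (Set.Icc (v+e) v) := by
      rwa [Set.uIcc_of_ge (le_of_lt hab)] at hc
    have hd' : ∀ x ∈ Set.Ioo (v+e) v, HasDerivAt f (f' x) x := by
      intro x hx; apply hd; rwa [min_eq_right hab.le, max_eq_left hab.le]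
    obtain ⟨c, hc1, hc2⟩ := exists_hasDerivAt_eq_slope f f' hab hc' hd'
    refine ⟨c, by rw [min_eq_right hab.le, max_eq_left hab.le]; exact hc1, ?_⟩
    rw [hc2]
    rw [show v - (v+e) = -e by ring, div_neg, ← neg_div, neg_sub]
  · have hab : v < v + e := by linarith
    have hc' : ContinuousOn f (Set.Icc v (v+e)) := by
      rwa [Set.uIcc_of_le (le_of_lt hab)] at hc
    have hd' : ∀ x ∈ Set.Ioo v (v+e), HasDerivAt f (f' x) x := by
      intro x hx; apply hd; rwa [min_eq_left hab.le, max_eq_right hab.le]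
    obtain ⟨c, hc1, hc2⟩ := exists_hasDerivAt_eq_slope f f' hab hc' hd'
    refine ⟨c, by rw [min_eq_left hab.le, max_eq_right hab.le]; exact hc1, ?_⟩
    rw [hc2, show v + e - v = e by ring]

lemma gram_sum_nonneg {I : Set ℝ} {k : ℝ → ℝ → ℝ}
    (hpsd : ∀ (n : ℕ) (t : Fin n → ℝ), (∀ i, t i ∈ I) →
      (Matrix.of fun i j => k (t i) (t j)).PosSemidef)
    {n : ℕ} (p : Fin n ⊕ Fin n → ℝ) (hp : ∀ a, p a ∈ I) (w : Fin n ⊕ Fin n → ℝ) :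
    0 ≤ ∑ a, ∑ b, w a * k (p a) (p b) * w b := by
  have h := (hpsd (n+n) (p ∘ finSumFinEquiv.symm) (fun i => hp _)).dotProduct_mulVec_nonneg (w ∘ finSumFinEquiv.symm)
  simp only [star_trivial, dotProduct, Matrix.mulVec, Matrix.of_apply,
    Function.comp] at h
  have heq : ∑ i : Fin (n+n), (w (finSumFinEquiv.symm i) *
      ∑ j : Fin (n+n), k (p (finSumFinEquiv.symm i)) (p (finSumFinEquiv.symm j)) *
        w (finSumFinEquiv.symm j)) = ∑ a, ∑ b, w a * k (p a) (p b) * w b := by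
    refine Fintype.sum_equiv finSumFinEquiv.symm
      (fun i => w (finSumFinEquiv.symm i) * ∑ j : Fin (n+n),
        k (p (finSumFinEquiv.symm i)) (p (finSumFinEquiv.symm j)) * w (finSumFinEquiv.symm j))
      (fun a => ∑ b, w a * k (p a) (p b) * w b) (fun i => ?_)
    rw [Finset.mul_sum]
    refine Fintype.sum_equiv finSumFinEquiv.symm _ _ (fun j => ?_)
    ring
  rw [← heq]
  exact le_trans h (le_of_eq (Finset.sum_congr rfl (fun i _ => rfl)))

section Core

variable {I : Set ℝ} {k : ℝ → ℝ → ℝ}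

lemma core (hI : I.OrdConnected) (hk : ContDiffOn ℝ 2 (Function.uncurry k) (I ×ˢ I))
    {a b : ℝ} (ha : a ∈ I) (hb : b ∈ I) (hab : a < b)
    {u v : ℝ} (hu : u ∈ I) (hv : v ∈ I)
    {su sv δu δv : ℝ} (hsu : su = 1 ∨ su = -1) (hsv : sv = 1 ∨ sv = -1)
    (hδu : 0 < δu) (hδv : 0 < δv)
    (hdu : ∀ h : ℝ, 0 < h → h ≤ δu → u + su*h ∈ I)
    (hdv : ∀ h : ℝ, 0 < h → h ≤ δv → v + sv*h ∈ I) :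
    Tendsto (fun h => (k u (v+sv*h) - k u v)/(sv*h)) (𝓝[>] (0:ℝ)) (𝓝 (pdy I k u v)) ∧
    Tendsto (fun h => (k (u+su*h) v - k u v)/(su*h)) (𝓝[>] (0:ℝ)) (𝓝 (pdx I k u v)) ∧
    Tendsto (fun h => (k (u+su*h) (v+sv*h) - k (u+su*h) v - k u (v+sv*h) + k u v)/(su*sv*h^2))
      (𝓝[>] (0:ℝ)) (𝓝 (pdxy I k u v)) := by
  set F := Function.uncurry k with hF
  set S := I ×ˢ I with hS
  set P : ℝ × ℝ → ℝ := fun p => (fderivWithin ℝ F S p) ((0:ℝ),(1:ℝ)) with hP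
  set Qx : ℝ × ℝ → ℝ := fun p => (fderivWithin ℝ F S p) ((1:ℝ),(0:ℝ)) with hQx
  set D2 : ℝ × ℝ → ℝ := fun p => (fderivWithin ℝ P S p) ((1:ℝ),(0:ℝ)) with hD2
  have hIoo : Ioo a b ⊆ I := fun x hx => hI.out ha hb ⟨hx.1.le, hx.2.le⟩
  have hint : (interior I).Nonempty :=
    ⟨(a+b)/2, mem_interior.2 ⟨Ioo a b, hIoo, isOpen_Ioo, by constructor <;> linarith⟩⟩
  have hUI : UniqueDiffOn ℝ I := uniqueDiffOn_convex hI.convex hint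
  have hUS : UniqueDiffOn ℝ S := hUI.prod hUI
  have hF1 : DifferentiableOn ℝ F S := hk.differentiableOn (by norm_num)
  have hP1 : ContDiffOn ℝ 1 P S :=
    (hk.fderivWithin hUS (by norm_num)).clm_apply contDiffOn_const
  have hPd : DifferentiableOn ℝ P S := hP1.differentiableOn one_ne_zero
  have hPcont : ContinuousOn P S := hP1.continuousOn
  have hD2cont : ContinuousOn D2 S :=
    (hP1.continuousOn_fderivWithin hUS le_rfl).clm_apply continuousOn_const
  have hIoo_sub : ∀ {p q : ℝ}, p ∈ I → q ∈ I → Ioo (min p q) (max p q) ⊆ I := by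
    intro p q hp hq x hx
    exact hI.uIcc_subset hp hq (Ioo_subset_Icc_self hx)
  have hnhds : ∀ {p q c : ℝ}, p ∈ I → q ∈ I → c ∈ Ioo (min p q) (max p q) → I ∈ 𝓝 c :=
    fun hp hq hc => Filter.mem_of_superset (isOpen_Ioo.mem_nhds hc) (hIoo_sub hp hq)
  have sliceY : ∀ (G : ℝ × ℝ → ℝ), DifferentiableOn ℝ G S → ∀ {x y : ℝ}, x ∈ I → y ∈ I →
      HasDerivWithinAt (fun y' => G (x, y')) ((fderivWithin ℝ G S (x,y)) ((0:ℝ),(1:ℝ))) I y := by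
    intro G hG x y hx hy
    have hFd := (hG (x,y) (Set.mk_mem_prod hx hy)).hasFDerivWithinAt
    have hg : HasDerivWithinAt (fun y' => ((x, y') : ℝ × ℝ)) ((0:ℝ),(1:ℝ)) I y :=
      HasDerivWithinAt.prodMk (hasDerivWithinAt_const y I x) (hasDerivWithinAt_id y I)
    exact hFd.comp_hasDerivWithinAt y hg (fun y' hy' => Set.mk_mem_prod hx hy')
  have sliceX : ∀ (G : ℝ × ℝ → ℝ), DifferentiableOn ℝ G S → ∀ {x y : ℝ}, x ∈ I → y ∈ I →
      HasDerivWithinAt (fun x' => G (x', y)) ((fderivWithin ℝ G S (x,y)) ((1:ℝ),(0:ℝ))) I x := by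
    intro G hG x y hx hy
    have hFd := (hG (x,y) (Set.mk_mem_prod hx hy)).hasFDerivWithinAt
    have hg : HasDerivWithinAt (fun x' => ((x', y) : ℝ × ℝ)) ((1:ℝ),(0:ℝ)) I x :=
      HasDerivWithinAt.prodMk (hasDerivWithinAt_id x I) (hasDerivWithinAt_const x I y)
    exact hFd.comp_hasDerivWithinAt x hg (fun x' hx' => Set.mk_mem_prod hx' hy)
  have pdy_eq : ∀ {x y : ℝ}, x ∈ I → y ∈ I → pdy I k x y = P (x,y) := by
    intro x y hx hy
    exact (sliceY F hF1 hx hy).derivWithin (hUI _ hy)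
  have pdx_eq : ∀ {x y : ℝ}, x ∈ I → y ∈ I → pdx I k x y = Qx (x,y) := by
    intro x y hx hy
    exact (sliceX F hF1 hx hy).derivWithin (hUI _ hx)
  have pdxy_eq : pdxy I k u v = D2 (u,v) := by
    have h1 : derivWithin (fun x => pdy I k x v) I u = derivWithin (fun x => P (x,v)) I u :=
      derivWithin_congr (fun x hx => pdy_eq hx hv) (pdy_eq hu hv)
    rw [pdxy, h1]
    exact (sliceX P hPd hu hv).derivWithin (hUI _ hu)
  have hsu0 : su ≠ 0 := by rcases hsu with h | h <;> rw [h] <;> norm_num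
  have hsv0 : sv ≠ 0 := by rcases hsv with h | h <;> rw [h] <;> norm_num
  have hFcont : ContinuousOn F S := hk.continuousOn
  have sliceContY : ∀ (G : ℝ × ℝ → ℝ), ContinuousOn G S → ∀ {x : ℝ}, x ∈ I →
      ContinuousOn (fun y => G (x, y)) I := by
    intro G hG x hx
    exact hG.comp ((continuous_const.prodMk continuous_id).continuousOn)
      (fun y hy => Set.mk_mem_prod hx hy)
  have sliceContX : ∀ (G : ℝ × ℝ → ℝ), ContinuousOn G S → ∀ {y : ℝ}, y ∈ I →
      ContinuousOn (fun x => G (x, y)) I := by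
    intro G hG y hy
    exact hG.comp ((continuous_id.prodMk continuous_const).continuousOn)
      (fun x hxx => Set.mk_mem_prod hxx hy)
  have hT1 : Tendsto (fun h => (k u (v+sv*h) - k u v)/(sv*h)) (𝓝[>] (0:ℝ))
      (𝓝 (pdy I k u v)) := by
    rw [pdy_eq hu hv]
    have hder : HasDerivWithinAt (fun y' => k u y') (P (u,v)) I v := sliceY F hF1 hu hv
    have hslope := hasDerivWithinAt_iff_tendsto_slope.1 hder
    have hphi : Tendsto (fun h : ℝ => v + sv*h) (𝓝[>] (0:ℝ)) (𝓝[I \ {v}] v) := by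
      rw [tendsto_nhdsWithin_iff]
      constructor
      · have hc : Continuous (fun h : ℝ => v + sv*h) := continuous_const.add (continuous_const.mul continuous_id)
        have h2 := hc.tendsto 0
        simp only [mul_zero, add_zero] at h2
        exact h2.mono_left nhdsWithin_le_nhds
      · filter_upwards [Ioc_mem_nhdsGT_of_mem (Set.left_mem_Ico.2 hδv)] with h hh
        refine ⟨hdv h hh.1 hh.2, ?_⟩
        simp only [Set.mem_singleton_iff]
        intro hcon
        have h3 : sv * h = 0 := by linarith
        rcases mul_eq_zero.1 h3 with h' | h'
        · exact hsv0 h'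
        · exact absurd h' (ne_of_gt hh.1)
    refine (hslope.comp hphi).congr (fun h => ?_)
    simp only [Function.comp_apply, slope_def_field]
    rw [show v + sv*h - v = sv*h by ring]
  have hT2 : Tendsto (fun h => (k (u+su*h) v - k u v)/(su*h)) (𝓝[>] (0:ℝ))
      (𝓝 (pdx I k u v)) := by
    rw [pdx_eq hu hv]
    have hder : HasDerivWithinAt (fun x' => k x' v) (Qx (u,v)) I u := sliceX F hF1 hu hv
    have hslope := hasDerivWithinAt_iff_tendsto_slope.1 hder
    have hphi : Tendsto (fun h : ℝ => u + su*h) (𝓝[>] (0:ℝ)) (𝓝[I \ {u}] u) := by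
      rw [tendsto_nhdsWithin_iff]
      constructor
      · have hc : Continuous (fun h : ℝ => u + su*h) := continuous_const.add (continuous_const.mul continuous_id)
        have h2 := hc.tendsto 0
        simp only [mul_zero, add_zero] at h2
        exact h2.mono_left nhdsWithin_le_nhds
      · filter_upwards [Ioc_mem_nhdsGT_of_mem (Set.left_mem_Ico.2 hδu)] with h hh
        refine ⟨hdu h hh.1 hh.2, ?_⟩
        simp only [Set.mem_singleton_iff]
        intro hcon
        have h3 : su * h = 0 := by linarith
        rcases mul_eq_zero.1 h3 with h' | h'
        · exact hsu0 h'
        · exact absurd h' (ne_of_gt hh.1)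
    refine (hslope.comp hphi).congr (fun h => ?_)
    simp only [Function.comp_apply, slope_def_field]
    rw [show u + su*h - u = su*h by ring]
  have hT3 : Tendsto (fun h =>
      (k (u+su*h) (v+sv*h) - k (u+su*h) v - k u (v+sv*h) + k u v)/(su*sv*h^2))
      (𝓝[>] (0:ℝ)) (𝓝 (pdxy I k u v)) := by
    rw [pdxy_eq]
    rw [Metric.tendsto_nhdsWithin_nhds]
    intro ε hε
    have hcw : ContinuousWithinAt D2 S (u,v) := hD2cont (u,v) (Set.mk_mem_prod hu hv)
    rw [Metric.continuousWithinAt_iff] at hcw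
    obtain ⟨δ₀, hδ₀pos, hδ₀⟩ := hcw ε hε
    refine ⟨min δ₀ (min δu δv), by positivity, ?_⟩
    intro h hh hdist
    have hh0 : (0:ℝ) < h := hh
    have hdist' : h < min δ₀ (min δu δv) := by
      rwa [Real.dist_eq, sub_zero, abs_of_pos hh0] at hdist
    have hhu : h ≤ δu :=
      le_of_lt (lt_of_lt_of_le hdist' (le_trans (min_le_right _ _) (min_le_left _ _)))
    have hhv : h ≤ δv :=
      le_of_lt (lt_of_lt_of_le hdist' (le_trans (min_le_right _ _) (min_le_right _ _)))
    have hhδ₀ : h < δ₀ := lt_of_lt_of_le hdist' (min_le_left _ _)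
    have humem : u + su*h ∈ I := hdu h hh0 hhu
    have hvmem : v + sv*h ∈ I := hdv h hh0 hhv
    have hsvh : sv*h ≠ 0 := mul_ne_zero hsv0 (ne_of_gt hh0)
    have hsuh : su*h ≠ 0 := mul_ne_zero hsu0 (ne_of_gt hh0)
    have hcont1 : ContinuousOn (fun y => k (u+su*h) y - k u y) (Set.uIcc v (v+sv*h)) :=
      ((sliceContY F hFcont humem).sub (sliceContY F hFcont hu)).mono
        (hI.uIcc_subset hv hvmem)
    have hderiv1 : ∀ y ∈ Set.Ioo (min v (v+sv*h)) (max v (v+sv*h)),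
        HasDerivAt (fun y' => k (u+su*h) y' - k u y') (P (u+su*h, y) - P (u, y)) y := by
      intro y hy
      have hyI : y ∈ I := hIoo_sub hv hvmem hy
      have hn : I ∈ 𝓝 y := hnhds hv hvmem hy
      exact ((sliceY F hF1 humem hyI).hasDerivAt hn).sub ((sliceY F hF1 hu hyI).hasDerivAt hn)
    obtain ⟨η, hη, hη2⟩ := mvt_step (fun y => k (u+su*h) y - k u y)
      (fun y => P (u+su*h, y) - P (u, y)) v (sv*h) hsvh hcont1 hderiv1
    have hηI : η ∈ I := hIoo_sub hv hvmem hη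
    have hcont2 : ContinuousOn (fun x => P (x, η)) (Set.uIcc u (u+su*h)) :=
      (sliceContX P hPcont hηI).mono (hI.uIcc_subset hu humem)
    have hderiv2 : ∀ x ∈ Set.Ioo (min u (u+su*h)) (max u (u+su*h)),
        HasDerivAt (fun x' => P (x', η)) (D2 (x, η)) x := by
      intro x hx
      exact (sliceX P hPd (hIoo_sub hu humem hx) hηI).hasDerivAt (hnhds hu humem hx)
    obtain ⟨ξ, hξ, hξ2⟩ := mvt_step (fun x => P (x, η)) (fun x => D2 (x, η)) u (su*h)
      hsuh hcont2 hderiv2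
    have hξI : ξ ∈ I := hIoo_sub hu humem hξ
    have hξ2' : D2 (ξ, η) = (P (u+su*h, η) - P (u, η))/(su*h) := hξ2
    have hη2' : P (u+su*h, η) - P (u, η) =
        ((k (u+su*h) (v+sv*h) - k u (v+sv*h)) - (k (u+su*h) v - k u v))/(sv*h) := hη2
    have hval : (k (u+su*h) (v+sv*h) - k (u+su*h) v - k u (v+sv*h) + k u v)/(su*sv*h^2)
        = D2 (ξ, η) := by
      rw [hξ2', hη2']
      field_simp
      ring
    rw [hval]
    have hb : ∀ {c w s' : ℝ}, s' = 1 ∨ s' = -1 →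
        c ∈ Set.Ioo (min w (w+s'*h)) (max w (w+s'*h)) → dist c w < h := by
      intro c w s' hs' hc
      obtain ⟨h1, h2⟩ := hc
      have hmin : w - h ≤ min w (w+s'*h) := by
        rcases hs' with h' | h' <;> subst h' <;> rw [le_min_iff] <;>
          constructor <;> linarith
      have hmax : max w (w+s'*h) ≤ w + h := by
        rcases hs' with h' | h' <;> subst h' <;> rw [max_le_iff] <;>
          constructor <;> linarith
      rw [Real.dist_eq, abs_sub_lt_iff]
      constructor <;> linarith
    have hdp : dist ((ξ, η) : ℝ × ℝ) ((u,v) : ℝ × ℝ) < δ₀ := by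
      rw [Prod.dist_eq]
      exact max_lt (lt_trans (hb hsu hξ) hhδ₀) (lt_trans (hb hsv hη) hhδ₀)
    exact hδ₀ (Set.mk_mem_prod hξI hηI) hdp
  exact ⟨hT1, hT2, hT3⟩

end Core

/-- Let `k` be a `C²` symmetric positive semi-definite kernel on an interval `I`. Then for
any times `t 1, …, t n ∈ I`, the `2n × 2n` matrix with blocks `k (t i) (t j)`,
`∂k/∂y (t i) (t j)`, `∂k/∂x (t i) (t j)`, `∂²k/(∂x∂y) (t i) (t j)` — the covariance
structure of a GP with kernel `k` together with its mean-square derivative — is positive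
semi-definite. -/
theorem derivative_gram_posSemidef
    (I : Set ℝ) (hI : I.OrdConnected) (k : ℝ → ℝ → ℝ)
    (hk : ContDiffOn ℝ 2 (Function.uncurry k) (I ×ˢ I))
    (hsym : ∀ u ∈ I, ∀ v ∈ I, k u v = k v u)
    (hpsd : ∀ (n : ℕ) (t : Fin n → ℝ), (∀ i, t i ∈ I) →
      (Matrix.of fun i j => k (t i) (t j)).PosSemidef)
    (n : ℕ) (t : Fin n → ℝ) (ht : ∀ i, t i ∈ I) :
    (Matrix.fromBlocks
      (Matrix.of fun i j => k (t i) (t j))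
      (Matrix.of fun i j => pdy I k (t i) (t j))
      (Matrix.of fun i j => pdx I k (t i) (t j))
      (Matrix.of fun i j => pdxy I k (t i) (t j))).PosSemidef := by
  by_cases hdeg : ∃ a ∈ I, ∃ b ∈ I, a < b
  · obtain ⟨a, ha, b, hb, hab⟩ := hdeg
    have hdir : ∀ u : ℝ, u ∈ I → ∃ sv dv : ℝ, (sv = 1 ∨ sv = -1) ∧ 0 < dv ∧
        ∀ h : ℝ, 0 < h → h ≤ dv → u + sv*h ∈ I := by
      intro u hu
      rcases lt_trichotomy u b with hlt | heq | hgt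
      · refine ⟨1, b - u, Or.inl rfl, by linarith, fun h h0 hδ' => ?_⟩
        exact hI.out hu hb ⟨by linarith, by linarith⟩
      · refine ⟨-1, u - a, Or.inr rfl, by rw [heq]; linarith, fun h h0 hδ' => ?_⟩
        exact hI.out ha hu ⟨by linarith, by linarith⟩
      · refine ⟨-1, u - b, Or.inr rfl, by linarith, fun h h0 hδ' => ?_⟩
        exact hI.out hb hu ⟨by linarith, by linarith⟩
    choose s δ hs hδ hd using fun i => hdir (t i) (ht i)
    have hcore := fun i j => core hI hk ha hb hab (ht i) (ht j) (hs i) (hs j)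
      (hδ i) (hδ j) (hd i) (hd j)
    have hs0 : ∀ i, s i ≠ 0 := by
      intro i; rcases hs i with h' | h' <;> rw [h'] <;> norm_num
    have hxysymm : ∀ i j, pdxy I k (t i) (t j) = pdxy I k (t j) (t i) := by
      intro i j
      have h1 := (hcore i j).2.2
      have h2 := (hcore j i).2.2
      have hev : (fun h : ℝ => (k (t j + s j*h) (t i + s i*h) - k (t j + s j*h) (t i)
            - k (t j) (t i + s i*h) + k (t j) (t i))/(s j*s i*h^2))
          =ᶠ[𝓝[>] (0:ℝ)] (fun h : ℝ => (k (t i + s i*h) (t j + s j*h)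
            - k (t i + s i*h) (t j) - k (t i) (t j + s j*h) + k (t i) (t j))/(s i*s j*h^2)) := by
        filter_upwards [Ioc_mem_nhdsGT_of_mem
          (Set.left_mem_Ico.2 (lt_min (hδ i) (hδ j)))] with h hh
        have h0 : 0 < h := hh.1
        have hi : t i + s i*h ∈ I := hd i h h0 (le_trans hh.2 (min_le_left _ _))
        have hj : t j + s j*h ∈ I := hd j h h0 (le_trans hh.2 (min_le_right _ _))
        rw [hsym _ hj _ hi, hsym _ hj _ (ht i), hsym _ (ht j) _ hi, hsym _ (ht j) _ (ht i)]
        ring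
      exact tendsto_nhds_unique h1 (Filter.Tendsto.congr' hev h2)
    have hyx : ∀ i j, pdy I k (t i) (t j) = pdx I k (t j) (t i) := by
      intro i j
      exact derivWithin_congr (fun y hy => hsym _ (ht i) _ hy) (hsym _ (ht i) _ (ht j))
    refine Matrix.PosSemidef.of_dotProduct_mulVec_nonneg ?_ ?_
    · show _ᴴ = _
      ext a' b'
      rcases a' with i | i <;> rcases b' with j | j <;>
        simp only [Matrix.conjTranspose_apply, Matrix.fromBlocks_apply₁₁,
          Matrix.fromBlocks_apply₁₂, Matrix.fromBlocks_apply₂₁, Matrix.fromBlocks_apply₂₂,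
          Matrix.of_apply, star_trivial]
      · exact hsym _ (ht j) _ (ht i)
      · exact (hyx i j).symm
      · exact hyx j i
      · exact hxysymm j i
    · intro x
      have hQ : dotProduct (star x) ((Matrix.fromBlocks
          (Matrix.of fun i j => k (t i) (t j))
          (Matrix.of fun i j => pdy I k (t i) (t j))
          (Matrix.of fun i j => pdx I k (t i) (t j))
          (Matrix.of fun i j => pdxy I k (t i) (t j))) *ᵥ x) = ∑ i, ∑ j,
          (x (Sum.inl i) * x (Sum.inl j) * k (t i) (t j)
          + x (Sum.inl i) * x (Sum.inr j) * pdy I k (t i) (t j)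
          + x (Sum.inr i) * x (Sum.inl j) * pdx I k (t i) (t j)
          + x (Sum.inr i) * x (Sum.inr j) * pdxy I k (t i) (t j)) := by
        simp only [star_trivial, dotProduct, Matrix.mulVec, Fintype.sum_sum_type,
          Matrix.fromBlocks_apply₁₁, Matrix.fromBlocks_apply₁₂, Matrix.fromBlocks_apply₂₁,
          Matrix.fromBlocks_apply₂₂, Matrix.of_apply]
        rw [← Finset.sum_add_distrib]
        refine Finset.sum_congr rfl (fun i _ => ?_)
        simp only [mul_add, Finset.mul_sum]
        rw [← Finset.sum_add_distrib, ← Finset.sum_add_distrib, ← Finset.sum_add_distrib]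
        refine Finset.sum_congr rfl (fun j _ => ?_)
        ring
      rw [hQ]
      have hTend : Filter.Tendsto (fun h : ℝ => ∑ i, ∑ j,
          (x (Sum.inl i) * x (Sum.inl j) * k (t i) (t j)
          + x (Sum.inl i) * x (Sum.inr j) * ((k (t i) (t j + s j*h) - k (t i) (t j))/(s j*h))
          + x (Sum.inr i) * x (Sum.inl j) * ((k (t i + s i*h) (t j) - k (t i) (t j))/(s i*h))
          + x (Sum.inr i) * x (Sum.inr j) *
            ((k (t i + s i*h) (t j + s j*h) - k (t i + s i*h) (t j) - k (t i) (t j + s j*h)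
              + k (t i) (t j))/(s i*s j*h^2))))
          (𝓝[>] (0:ℝ)) (𝓝 (∑ i, ∑ j,
          (x (Sum.inl i) * x (Sum.inl j) * k (t i) (t j)
          + x (Sum.inl i) * x (Sum.inr j) * pdy I k (t i) (t j)
          + x (Sum.inr i) * x (Sum.inl j) * pdx I k (t i) (t j)
          + x (Sum.inr i) * x (Sum.inr j) * pdxy I k (t i) (t j)))) := by
        refine tendsto_finset_sum _ (fun i _ => ?_)
        refine tendsto_finset_sum _ (fun j _ => ?_)
        exact ((tendsto_const_nhds.add
          (Filter.Tendsto.const_mul _ (hcore i j).1)).add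
          (Filter.Tendsto.const_mul _ (hcore i j).2.1)).add
          (Filter.Tendsto.const_mul _ (hcore i j).2.2)
      have hEv : ∀ᶠ h : ℝ in 𝓝[>] (0:ℝ), (0:ℝ) ≤ ∑ i, ∑ j,
          (x (Sum.inl i) * x (Sum.inl j) * k (t i) (t j)
          + x (Sum.inl i) * x (Sum.inr j) * ((k (t i) (t j + s j*h) - k (t i) (t j))/(s j*h))
          + x (Sum.inr i) * x (Sum.inl j) * ((k (t i + s i*h) (t j) - k (t i) (t j))/(s i*h))
          + x (Sum.inr i) * x (Sum.inr j) *
            ((k (t i + s i*h) (t j + s j*h) - k (t i + s i*h) (t j) - k (t i) (t j + s j*h)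
              + k (t i) (t j))/(s i*s j*h^2))) := by
        have hall : ∀ᶠ h : ℝ in 𝓝[>] (0:ℝ), ∀ i, h ≤ δ i := by
          rw [Filter.eventually_all]
          intro i
          filter_upwards [mem_nhdsWithin_of_mem_nhds (Iio_mem_nhds (hδ i))] with h hh
          exact le_of_lt hh
        filter_upwards [hall, self_mem_nhdsWithin] with h hall' hh0
        have h0 : (0:ℝ) < h := hh0
        have hne : ∀ i, s i * h ≠ 0 := fun i => mul_ne_zero (hs0 i) (ne_of_gt h0)
        have hgram := gram_sum_nonneg hpsd
          (Sum.elim t (fun i => t i + s i * h))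
          (by intro a'
              rcases a' with i | i
              · exact ht i
              · exact hd i h h0 (hall' i))
          (Sum.elim (fun i => x (Sum.inl i) - x (Sum.inr i)/(s i*h))
            (fun i => x (Sum.inr i)/(s i*h)))
        refine le_trans hgram (le_of_eq ?_)
        simp only [Fintype.sum_sum_type, Sum.elim_inl, Sum.elim_inr]
        rw [← Finset.sum_add_distrib]
        refine Finset.sum_congr rfl (fun i _ => ?_)
        rw [← Finset.sum_add_distrib, ← Finset.sum_add_distrib, ← Finset.sum_add_distrib]
        refine Finset.sum_congr rfl (fun j _ => ?_)
        field_simp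
        ring
      exact ge_of_tendsto hTend hEv
  · have hsub : ∀ u ∈ I, ∀ v ∈ I, u = v := by
      intro u hu v hv
      by_contra hne
      rcases lt_or_gt_of_ne hne with h | h
      · exact hdeg ⟨u, hu, v, hv, h⟩
      · exact hdeg ⟨v, hv, u, hu, h⟩
    have hzero : ∀ (f : ℝ → ℝ) (u : ℝ), u ∈ I → derivWithin f I u = 0 := by
      intro f u hu
      apply derivWithin_zero_of_not_accPt
      have he : I \ {u} = ∅ := by
        ext z
        simp only [Set.mem_diff, Set.mem_singleton_iff, Set.mem_empty_iff_false, iff_false,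
          not_and, not_not]
        intro hz
        exact hsub z hz u hu
      rw [accPt_iff_nhds]
      intro hacc
      obtain ⟨y, ⟨_, hy⟩, hne⟩ := hacc univ univ_mem
      exact hne (hsub y hy u hu)
    have hy0 : ∀ i j, pdy I k (t i) (t j) = 0 := fun i j => hzero _ _ (ht j)
    have hx0 : ∀ i j, pdx I k (t i) (t j) = 0 := fun i j => hzero _ _ (ht i)
    have hxy0 : ∀ i j, pdxy I k (t i) (t j) = 0 := fun i j => hzero _ _ (ht i)
    refine Matrix.PosSemidef.of_dotProduct_mulVec_nonneg ?_ ?_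
    · show _ᴴ = _
      ext a' b'
      rcases a' with i | i <;> rcases b' with j | j <;>
        simp only [Matrix.conjTranspose_apply, Matrix.fromBlocks_apply₁₁,
          Matrix.fromBlocks_apply₁₂, Matrix.fromBlocks_apply₂₁, Matrix.fromBlocks_apply₂₂,
          Matrix.of_apply, star_trivial, hy0, hx0, hxy0]
      exact hsym _ (ht j) _ (ht i)
    · intro x
      have h0 := (hpsd n t ht).dotProduct_mulVec_nonneg (fun i => x (Sum.inl i))
      simp only [star_trivial, dotProduct, Matrix.mulVec, Matrix.of_apply] at h0
      simp only [star_trivial, dotProduct, Matrix.mulVec, Fintype.sum_sum_type,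
        Matrix.fromBlocks_apply₁₁, Matrix.fromBlocks_apply₁₂, Matrix.fromBlocks_apply₂₁,
        Matrix.fromBlocks_apply₂₂, Matrix.of_apply, hy0, hx0, hxy0, zero_mul, mul_zero,
        Finset.sum_const_zero, add_zero, zero_add]
      exact h0

end
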